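/- The family (i, j) ↦ |QNC(p_i, p_j)|², indexed by pairs of positive integers i, j, is summable; that is, ∑_{i=1}^∞ ∑_{j=1}^∞ |R_{ij}|² < ∞, where R_{ij} = QNC(p_i, p_j). -/

import Mathlib

open Real

/-- `F(x,y) = ∑_{k=1}^∞ x^{k-1} · y^{-x^k} / (1 - y^{-x^k})²`. -/
noncomputable def F (x y : ℝ) : ℝ :=
  ∑' k : ℕ, x ^ (k : ℝ) * y ^ (-(x ^ ((k : ℝ) + 1))) / (1 - y ^ (-(x ^ ((k : ℝ) + 1)))) ^ 2

/-- `QNC(x,y) = (1/(12xy)) · ( x(y-1)F(x,y) - y(x-1)F(y,x) )`. -/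
noncomputable def QNC (x y : ℝ) : ℝ :=
  1 / (12 * x * y) * (x * (y - 1) * F x y - y * (x - 1) * F y x)

/-- `nthPrime i` is the `(i+1)`-st prime, so `nthPrime 0 = 2`, `nthPrime 1 = 3`, ... -/
noncomputable def nthPrime (i : ℕ) : ℕ := Nat.nth Nat.Prime i

/-! ### Auxiliary lemmas -/

lemma two_mul_le_two_rpow {x : ℝ} (hx : 2 ≤ x) : 2 * x ≤ (2:ℝ) ^ x := by
  have hlog : (1:ℝ)/2 ≤ Real.log 2 := by
    have := Real.log_two_gt_d9; linarith
  rw [Real.rpow_def_of_pos two_pos]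
  have h2 : Real.log 2 * x = 2 * Real.log 2 + (x - 2) * Real.log 2 := by ring
  rw [h2, Real.exp_add]
  have h4 : Real.exp (2 * Real.log 2) = 4 := by
    rw [show (2:ℝ) * Real.log 2 = Real.log 4 by
      rw [show (4:ℝ) = 2 ^ 2 by norm_num, Real.log_pow]; push_cast; ring, Real.exp_log]
    norm_num
  rw [h4]
  have h5 : (x - 2) * Real.log 2 + 1 ≤ Real.exp ((x - 2) * Real.log 2) :=
    Real.add_one_le_exp _
  nlinarith

lemma mul_rpow_neg_le_half {x y : ℝ} (hx : 2 ≤ x) (hy : 2 ≤ y) :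
    x * y ^ (-x) ≤ 1/2 := by
  have hx0 : (0:ℝ) < x := by linarith
  have h2x : (0:ℝ) < (2:ℝ) ^ x := Real.rpow_pos_of_pos two_pos x
  have hyx : (2:ℝ) ^ x ≤ y ^ x := Real.rpow_le_rpow (by norm_num) hy (by linarith)
  have h1 : y ^ (-x) ≤ ((2:ℝ) ^ x)⁻¹ := by
    rw [Real.rpow_neg (by linarith)]
    exact inv_anti₀ h2x hyx
  have h2 : x * y ^ (-x) ≤ x * ((2:ℝ) ^ x)⁻¹ :=
    mul_le_mul_of_nonneg_left h1 (le_of_lt hx0)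
  refine h2.trans ?_
  rw [← div_eq_mul_inv, div_le_iff₀ h2x]
  have := two_mul_le_two_rpow hx
  linarith

lemma F_term_le {x y : ℝ} (hx : 2 ≤ x) (hy : 2 ≤ y) (k : ℕ) :
    x ^ (k : ℝ) * y ^ (-(x ^ ((k : ℝ) + 1))) / (1 - y ^ (-(x ^ ((k : ℝ) + 1)))) ^ 2
      ≤ 16/9 * y ^ (-x) * (1/2 : ℝ) ^ k := by
  have hx0 : (0:ℝ) < x := by linarith
  have hy0 : (0:ℝ) < y := by linarith
  set e : ℝ := x ^ ((k : ℝ) + 1) with he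
  set a : ℝ := y ^ (-e) with ha
  have he2 : 2 ≤ e := by
    have : x ^ (1:ℝ) ≤ x ^ ((k:ℝ)+1) :=
      Real.rpow_le_rpow_of_exponent_le (by linarith)
        (by have := Nat.cast_nonneg (α := ℝ) k; linarith)
    rw [Real.rpow_one] at this; linarith
  have ha_pos : 0 < a := Real.rpow_pos_of_pos hy0 _
  have ha_le : a ≤ 1/4 := by
    have h1 : a ≤ y ^ (-(2:ℝ)) :=
      Real.rpow_le_rpow_of_exponent_le (by linarith) (by linarith)
    have h2 : y ^ (-(2:ℝ)) ≤ 1/4 := by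
      rw [Real.rpow_neg (le_of_lt hy0), show ((2:ℝ)) = ((2:ℕ):ℝ) by norm_num,
        Real.rpow_natCast]
      rw [show (1:ℝ)/4 = (4:ℝ)⁻¹ by norm_num]
      apply inv_anti₀ (by norm_num)
      nlinarith
    linarith
  have hden : (9:ℝ)/16 ≤ (1 - a) ^ 2 := by nlinarith
  have step1 : x ^ (k : ℝ) * a / (1 - a) ^ 2 ≤ 16/9 * (x ^ (k : ℝ) * a) := by
    have hnum : 0 ≤ x ^ (k:ℝ) * a := by positivity
    calc x ^ (k : ℝ) * a / (1 - a) ^ 2 ≤ x ^ (k:ℝ) * a / (9/16) :=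
          div_le_div_of_nonneg_left hnum (by norm_num) hden
      _ = 16/9 * (x ^ (k:ℝ) * a) := by ring
  have hxk : (k:ℝ) + 1 ≤ x ^ (k:ℝ) := by
    have h2k : ((k:ℝ)) + 1 ≤ (2:ℝ) ^ (k:ℝ) := by
      rw [Real.rpow_natCast]
      have := Nat.lt_two_pow_self (n := k)
      have : (k:ℝ) + 1 ≤ ((2^k : ℕ):ℝ) := by exact_mod_cast this
      simpa using this
    have : (2:ℝ) ^ (k:ℝ) ≤ x ^ (k:ℝ) :=
      Real.rpow_le_rpow (by norm_num) hx (by positivity)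
    linarith
  have hee : x * ((k:ℝ)+1) ≤ e := by
    have : e = x ^ (k:ℝ) * x := by
      rw [he, Real.rpow_add_one (ne_of_gt hx0)]
    rw [this]
    nlinarith
  have ha2 : a ≤ (y ^ (-x)) ^ (k+1 : ℕ) := by
    have h1 : a ≤ y ^ (-(x * ((k:ℝ)+1))) :=
      Real.rpow_le_rpow_of_exponent_le (by linarith) (by linarith)
    have h2 : y ^ (-(x * ((k:ℝ)+1))) = (y ^ (-x)) ^ (k+1 : ℕ) := by
      rw [← Real.rpow_natCast (y ^ (-x)) (k+1), ← Real.rpow_mul (le_of_lt hy0)]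
      push_cast; ring_nf
    rw [← h2]; exact h1
  have step2 : x ^ (k:ℝ) * a ≤ y ^ (-x) * (1/2:ℝ)^k := by
    have hxkc : x ^ (k:ℝ) = x ^ (k:ℕ) := Real.rpow_natCast x k
    have hq : 0 ≤ y ^ (-x) := le_of_lt (Real.rpow_pos_of_pos hy0 _)
    calc x ^ (k:ℝ) * a ≤ x ^ (k:ℝ) * (y ^ (-x)) ^ (k+1 : ℕ) := by
          apply mul_le_mul_of_nonneg_left ha2 (by positivity)
      _ = y ^ (-x) * (x * y ^ (-x)) ^ (k:ℕ) := by
          rw [hxkc, pow_succ, mul_pow]; ring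
      _ ≤ y ^ (-x) * (1/2:ℝ) ^ k := by
          apply mul_le_mul_of_nonneg_left _ hq
          exact pow_le_pow_left₀ (by positivity) (mul_rpow_neg_le_half hx hy) k
  calc x ^ (k : ℝ) * a / (1 - a) ^ 2 ≤ 16/9 * (x ^ (k:ℝ) * a) := step1
    _ ≤ 16/9 * (y ^ (-x) * (1/2:ℝ)^k) := by linarith
    _ = 16/9 * y ^ (-x) * (1/2:ℝ)^k := by ring

lemma F_term_nonneg {x y : ℝ} (hx : 0 ≤ x) (hy : 0 ≤ y) (k : ℕ) :
    0 ≤ x ^ (k : ℝ) * y ^ (-(x ^ ((k : ℝ) + 1))) / (1 - y ^ (-(x ^ ((k : ℝ) + 1)))) ^ 2 := by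
  apply div_nonneg _ (sq_nonneg _)
  exact mul_nonneg (Real.rpow_nonneg hx _) (Real.rpow_nonneg hy _)

lemma F_nonneg {x y : ℝ} (hx : 0 ≤ x) (hy : 0 ≤ y) : 0 ≤ F x y :=
  tsum_nonneg (F_term_nonneg hx hy)

lemma F_le {x y : ℝ} (hx : 2 ≤ x) (hy : 2 ≤ y) : F x y ≤ 32/9 * y ^ (-x) := by
  have hg : Summable (fun k : ℕ => 16/9 * y ^ (-x) * (1/2:ℝ)^k) :=
    (summable_geometric_of_lt_one (by norm_num) (by norm_num)).mul_left _
  have hf : Summable (fun k : ℕ =>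
      x ^ (k : ℝ) * y ^ (-(x ^ ((k : ℝ) + 1))) / (1 - y ^ (-(x ^ ((k : ℝ) + 1)))) ^ 2) :=
    Summable.of_nonneg_of_le (F_term_nonneg (by linarith) (by linarith)) (F_term_le hx hy) hg
  have h1 : F x y ≤ ∑' k : ℕ, 16/9 * y ^ (-x) * (1/2:ℝ)^k :=
    Summable.tsum_le_tsum (F_term_le hx hy) hf hg
  refine h1.trans ?_
  rw [tsum_mul_left, tsum_geometric_of_lt_one (by norm_num) (by norm_num)]
  rw [show ((1:ℝ)-1/2)⁻¹ = 2 by norm_num]; ring_nf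
  linarith [Real.rpow_pos_of_pos (show (0:ℝ)<y by linarith) (-x)]

lemma rpow_neg_base_anti {b y x : ℝ} (hb : 0 < b) (hby : b ≤ y) (hx : 0 ≤ x) :
    y ^ (-x) ≤ b ^ (-x) := by
  rw [Real.rpow_neg (by linarith), Real.rpow_neg (le_of_lt hb)]
  exact inv_anti₀ (Real.rpow_pos_of_pos hb x) (Real.rpow_le_rpow (le_of_lt hb) hby hx)

lemma abs_QNC_le {x y : ℝ} (hx : 2 ≤ x) (hy : 2 ≤ y) :
    |QNC x y| ≤ 8/27 * (y ^ (-x) + x ^ (-y)) := by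
  have hx0 : (0:ℝ) < x := by linarith
  have hy0 : (0:ℝ) < y := by linarith
  have hu0 : 0 < y ^ (-x) := Real.rpow_pos_of_pos hy0 _
  have hv0 : 0 < x ^ (-y) := Real.rpow_pos_of_pos hx0 _
  have hFxy := F_le hx hy
  have hFyx := F_le hy hx
  have hFxy0 : 0 ≤ F x y := F_nonneg (by linarith) (by linarith)
  have hFyx0 : 0 ≤ F y x := F_nonneg (by linarith) (by linarith)
  have hA : x * (y - 1) * F x y ≤ x * y * (32/9 * y ^ (-x)) := by
    apply mul_le_mul (by nlinarith) hFxy hFxy0 (by positivity)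
  have hA0 : 0 ≤ x * (y - 1) * F x y := by
    apply mul_nonneg (by nlinarith) hFxy0
  have hB : y * (x - 1) * F y x ≤ x * y * (32/9 * x ^ (-y)) := by
    apply mul_le_mul (by nlinarith) hFyx hFyx0 (by positivity)
  have hB0 : 0 ≤ y * (x - 1) * F y x := by
    apply mul_nonneg (by nlinarith) hFyx0
  have key : |x * (y - 1) * F x y - y * (x - 1) * F y x|
      ≤ x * y * (32/9 * y ^ (-x)) + x * y * (32/9 * x ^ (-y)) := by
    rw [abs_le]; constructor <;> linarith
  rw [QNC, abs_mul, abs_of_pos (by positivity : (0:ℝ) < 1 / (12 * x * y))]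
  calc 1 / (12 * x * y) * |x * (y - 1) * F x y - y * (x - 1) * F y x|
      ≤ 1 / (12 * x * y) * (x * y * (32/9 * y ^ (-x)) + x * y * (32/9 * x ^ (-y))) :=
        mul_le_mul_of_nonneg_left key (by positivity)
    _ = 8/27 * (y ^ (-x) + x ^ (-y)) := by
        field_simp
        ring

lemma QNC_sq_le {x y : ℝ} (hx : 2 ≤ x) (hy : 2 ≤ y) :
    |QNC x y| ^ 2 ≤ 128/729 *
      ((2:ℝ) ^ (-x) * y ^ (-(2:ℝ)) + x ^ (-(2:ℝ)) * (2:ℝ) ^ (-y)) := by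
  have hx0 : (0:ℝ) < x := by linarith
  have hy0 : (0:ℝ) < y := by linarith
  set u := y ^ (-x) with hu
  set v := x ^ (-y) with hv
  have hu0 : 0 < u := Real.rpow_pos_of_pos hy0 _
  have hv0 : 0 < v := Real.rpow_pos_of_pos hx0 _
  have h1 : |QNC x y| ^ 2 ≤ (8/27 * (u + v)) ^ 2 :=
    pow_le_pow_left₀ (abs_nonneg _) (abs_QNC_le hx hy) 2
  have hu2 : u * u ≤ (2:ℝ) ^ (-x) * y ^ (-(2:ℝ)) := by
    have h2 : u ≤ (2:ℝ) ^ (-x) := rpow_neg_base_anti two_pos hy (by linarith)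
    have h3 : u ≤ y ^ (-(2:ℝ)) :=
      Real.rpow_le_rpow_of_exponent_le (by linarith) (by linarith)
    exact mul_le_mul h2 h3 (le_of_lt hu0) (Real.rpow_nonneg (by norm_num) _)
  have hv2 : v * v ≤ x ^ (-(2:ℝ)) * (2:ℝ) ^ (-y) := by
    have h2 : v ≤ (2:ℝ) ^ (-y) := rpow_neg_base_anti two_pos hx (by linarith)
    have h3 : v ≤ x ^ (-(2:ℝ)) :=
      Real.rpow_le_rpow_of_exponent_le (by linarith) (by linarith)
    exact mul_le_mul h3 h2 (le_of_lt hv0) (Real.rpow_nonneg (by linarith) _)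
  nlinarith [sq_nonneg (u - v)]

/-- The family `(i, j) ↦ |QNC(p_i, p_j)|²` over pairs of positive integers
(reindexed from `0`) is summable: `∑_i ∑_j |R_{ij}|² < ∞`. -/
theorem summable_sq_abs_R :
    Summable (fun ij : ℕ × ℕ =>
      |QNC (nthPrime ij.1 : ℝ) (nthPrime ij.2 : ℝ)| ^ 2) := by
  have hp2 : ∀ i, (2:ℝ) ≤ (nthPrime i : ℝ) := fun i => by
    exact_mod_cast (Nat.prime_nth_prime i).two_le
  have hpi : ∀ i : ℕ, (i:ℝ) + 2 ≤ (nthPrime i : ℝ) := fun i => by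
    have := Nat.add_two_le_nth_prime i
    exact_mod_cast this
  have hA : Summable (fun i : ℕ => (2:ℝ) ^ (-(nthPrime i : ℝ))) := by
    have hgeo : Summable (fun i : ℕ => (1/2:ℝ) ^ i) :=
      summable_geometric_of_lt_one (by norm_num) (by norm_num)
    refine Summable.of_nonneg_of_le
      (fun i => Real.rpow_nonneg (by norm_num) _) (fun i => ?_) hgeo
    have h1 : (2:ℝ) ^ (-(nthPrime i : ℝ)) ≤ (2:ℝ) ^ (-(i:ℝ)) := by
      apply Real.rpow_le_rpow_of_exponent_le one_le_two
      have := hpi i; linarith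
    refine h1.trans_eq ?_
    rw [Real.rpow_neg (by norm_num), Real.rpow_natCast, ← inv_pow, one_div]
  have hB : Summable (fun i : ℕ => (nthPrime i : ℝ) ^ (-(2:ℝ))) := by
    have hbase : Summable (fun n : ℕ => 1 / ((n:ℝ) + 2) ^ 2) := by
      have h0 : Summable (fun n : ℕ => 1 / ((n:ℝ)) ^ 2) :=
        summable_one_div_nat_pow.2 one_lt_two
      have h1 := (summable_nat_add_iff 2).2 h0
      apply h1.congr
      intro n; push_cast; ring
    refine Summable.of_nonneg_of_le (fun i => Real.rpow_nonneg (by positivity) _)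
      (fun i => ?_) hbase
    have hpp : (0:ℝ) < (nthPrime i : ℝ) := by have := hp2 i; linarith
    rw [Real.rpow_neg (le_of_lt hpp), show ((2:ℝ)) = ((2:ℕ):ℝ) by norm_num,
      Real.rpow_natCast, one_div]
    apply inv_anti₀ (by positivity)
    have := hpi i
    push_cast
    nlinarith
  have hAnn : (0:ℕ → ℝ) ≤ fun i => (2:ℝ) ^ (-(nthPrime i : ℝ)) :=
    fun i => Real.rpow_nonneg (by norm_num) _
  have hBnn : (0:ℕ → ℝ) ≤ fun i => (nthPrime i : ℝ) ^ (-(2:ℝ)) :=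
    fun i => Real.rpow_nonneg (by positivity) _
  have hM : Summable (fun ij : ℕ × ℕ => 128/729 *
      ((2:ℝ) ^ (-(nthPrime ij.1 : ℝ)) * (nthPrime ij.2 : ℝ) ^ (-(2:ℝ)) +
        (nthPrime ij.1 : ℝ) ^ (-(2:ℝ)) * (2:ℝ) ^ (-(nthPrime ij.2 : ℝ)))) := by
    apply Summable.mul_left
    exact (hA.mul_of_nonneg hB hAnn hBnn).add (hB.mul_of_nonneg hA hBnn hAnn)
  exact Summable.of_nonneg_of_le (fun ij => by positivity)
    (fun ij => QNC_sq_le (hp2 ij.1) (hp2 ij.2)) hM
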